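/- Let α ∈ (0,1), let f satisfy assumption A1 with constant λ ≥ 0, and let the temporal mesh satisfy λ τ_j^α < 1/Γ(2−α) for all j = 1,…,M. Then for every u₀ ∈ ℝ there exists exactly one real sequence (U^m)_{m=0}^M with U⁰ = u₀ and δ_t^α U^m + f(t_m, U^m) = 0 for all m = 1,…,M. -/

import Mathlib

open Real MeasureTheory

/-- The L1 discrete Caputo operator of order `α` on the temporal mesh `t`. -/
noncomputable def deltaL1 (α : ℝ) (t : ℕ → ℝ) (V : ℕ → ℝ) (m : ℕ) : ℝ :=
  (1 / Real.Gamma (1 - α)) *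
    ∑ j ∈ Finset.Icc 1 m,
      ((V j - V (j - 1)) / (t j - t (j - 1))) *
        ∫ s in (t (j - 1))..(t j), (t m - s) ^ (-α)

/-- The "history" part of the L1 operator (terms `j ≤ m - 1`). -/
noncomputable def Rsum (α : ℝ) (t : ℕ → ℝ) (W : ℕ → ℝ) (m : ℕ) : ℝ :=
  (1 / Real.Gamma (1 - α)) *
    ∑ j ∈ Finset.Icc 1 (m - 1),
      ((W j - W (j - 1)) / (t j - t (j - 1))) *
        ∫ s in (t (j - 1))..(t j), (t m - s) ^ (-α)

/-- The coefficient of `W m` in the L1 operator. -/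
noncomputable def coef (α : ℝ) (t : ℕ → ℝ) (m : ℕ) : ℝ :=
  (t m - t (m - 1)) ^ (-α) / Real.Gamma (2 - α)

open Classical in
noncomputable def solveStep (f : ℝ → ℝ → ℝ) (c t' r : ℝ) : ℝ :=
  if h : ∃ x, c * x + f t' x = r then h.choose else 0

/-- The recursively constructed approximations. -/
noncomputable def seqV (α : ℝ) (t : ℕ → ℝ) (f : ℝ → ℝ → ℝ) (u₀ : ℝ) : ℕ → ℕ → ℝ
  | 0 => fun _ => u₀
  | n + 1 => fun k =>
      if k ≤ n then seqV α t f u₀ n k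
      else solveStep f (coef α t (n + 1)) (t (n + 1))
        (coef α t (n + 1) * seqV α t f u₀ n n - Rsum α t (seqV α t f u₀ n) (n + 1))

lemma seqV_stable (α : ℝ) (t : ℕ → ℝ) (f : ℝ → ℝ → ℝ) (u₀ : ℝ) :
    ∀ n k, k ≤ n → seqV α t f u₀ n k = seqV α t f u₀ k k := by
  intro n
  induction n with
  | zero =>
    intro k hk
    have : k = 0 := Nat.le_zero.mp hk
    subst this; rfl
  | succ n ih =>
    intro k hk
    rcases Nat.lt_or_ge k (n + 1) with h | h
    · have hk' : k ≤ n := by omega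
      simp only [seqV, if_pos hk']
      exact ih k hk'
    · have : k = n + 1 := by omega
      subst this; rfl

lemma scalar_solve (lam c t' r : ℝ) (hlam : 0 ≤ lam) (hc : lam < c)
    (f : ℝ → ℝ → ℝ) (hfc : ∀ t', Continuous fun s => f t' s)
    (hfA1 : ∀ t' s₁ s₂, s₂ ≤ s₁ → f t' s₁ - f t' s₂ ≥ -lam * (s₁ - s₂)) :
    ∃! x, c * x + f t' x = r := by
  set g : ℝ → ℝ := fun x => c * x + f t' x with hg
  have hgc : Continuous g := (continuous_const.mul continuous_id).add (hfc t')
  have hmono : ∀ x y : ℝ, y ≤ x → (c - lam) * (x - y) ≤ g x - g y := by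
    intro x y h
    have := hfA1 t' x y h
    simp only [hg]
    nlinarith
  have hd : 0 < c - lam := by linarith
  have hsm : StrictMono g := by
    intro x y hxy
    have := hmono y x hxy.le
    nlinarith
  set q : ℝ := (r - g 0) / (c - lam) with hq
  set a : ℝ := min 0 q with ha
  set b : ℝ := max 0 q with hb
  have hab : a ≤ b := min_le_max
  have hga : g a ≤ r := by
    have h1 := hmono 0 a (min_le_left 0 q)
    have h2 : a ≤ q := min_le_right 0 q
    have h3 : (c - lam) * a ≤ r - g 0 := by
      have := (mul_le_mul_of_nonneg_left h2 hd.le)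
      rw [hq] at this
      rw [mul_div_cancel₀ _ (ne_of_gt hd)] at this
      linarith
    nlinarith
  have hgb : r ≤ g b := by
    have h1 := hmono b 0 (le_max_left 0 q)
    have h2 : q ≤ b := le_max_right 0 q
    have h3 : r - g 0 ≤ (c - lam) * b := by
      have := (mul_le_mul_of_nonneg_left h2 hd.le)
      rw [hq] at this
      rw [mul_div_cancel₀ _ (ne_of_gt hd)] at this
      linarith
    nlinarith
  obtain ⟨x, -, hx⟩ := intermediate_value_Icc hab hgc.continuousOn ⟨hga, hgb⟩
  exact ⟨x, hx, fun y hy => hsm.injective (hy.trans hx.symm)⟩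

lemma integral_eval (α a b : ℝ) (hα : α < 1) :
    ∫ s in a..b, (b - s) ^ (-α) = (b - a) ^ (1 - α) / (1 - α) := by
  rw [intervalIntegral.integral_comp_sub_left (fun u => u ^ (-α)) b]
  rw [integral_rpow (Or.inl (by linarith : (-1 : ℝ) < -α))]
  rw [sub_self, Real.zero_rpow (by intro h; nlinarith : (-α + 1 : ℝ) ≠ 0)]
  rw [show (-α + 1 : ℝ) = 1 - α by ring]
  ring

lemma deltaL1_decomp (α : ℝ) (hα0 : 0 < α) (hα1 : α < 1) (t : ℕ → ℝ) (W : ℕ → ℝ)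
    (n : ℕ) (hτ : 0 < t (n + 1) - t n) :
    deltaL1 α t W (n + 1) = Rsum α t W (n + 1) + coef α t (n + 1) * (W (n + 1) - W n) := by
  have hΓ1 : 0 < Real.Gamma (1 - α) := Real.Gamma_pos_of_pos (by linarith)
  have hΓ2eq : Real.Gamma (2 - α) = (1 - α) * Real.Gamma (1 - α) := by
    rw [show (2 - α : ℝ) = (1 - α) + 1 by ring, Real.Gamma_add_one (by linarith)]
  unfold deltaL1 Rsum coef
  rw [Finset.sum_Icc_succ_top (by omega : 1 ≤ n + 1)]
  have hn : (n + 1 : ℕ) - 1 = n := rfl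
  rw [hn, mul_add, integral_eval α (t n) (t (n + 1)) hα1]
  have hpow : (t (n + 1) - t n) ^ (1 - α) = (t (n + 1) - t n) ^ (-α) * (t (n + 1) - t n) := by
    rw [show (1 - α : ℝ) = -α + 1 by ring, Real.rpow_add hτ, Real.rpow_one]
  rw [hpow, hΓ2eq]
  have key : ∀ (G e τ p x : ℝ), G ≠ 0 → e ≠ 0 → τ ≠ 0 →
      1 / G * (x / τ * (p * τ / e)) = p / (e * G) * x := by
    intro G e τ p x hG he hτ
    field_simp
  rw [key _ _ _ _ _ (ne_of_gt hΓ1) (by linarith : (1 - α : ℝ) ≠ 0) (ne_of_gt hτ)]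

lemma Rsum_congr (α : ℝ) (t : ℕ → ℝ) (W W' : ℕ → ℝ) (m : ℕ)
    (h : ∀ k, k ≤ m - 1 → W k = W' k) : Rsum α t W m = Rsum α t W' m := by
  unfold Rsum
  congr 1
  apply Finset.sum_congr rfl
  intro j hj
  simp only [Finset.mem_Icc] at hj
  rw [h j hj.2, h (j - 1) (by omega)]

theorem stmt2
    (α T lam : ℝ) (hα : α ∈ Set.Ioo (0 : ℝ) 1) (hT : 0 < T) (hlam : 0 ≤ lam)
    (f : ℝ → ℝ → ℝ)
    (hfc : ∀ t', Continuous fun s => f t' s)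
    (hfA1 : ∀ t' s₁ s₂, s₂ ≤ s₁ → f t' s₁ - f t' s₂ ≥ -lam * (s₁ - s₂))
    (M : ℕ) (hM : 1 ≤ M) (t : ℕ → ℝ)
    (ht0 : t 0 = 0) (htM : t M = T)
    (hmono : ∀ j, j < M → t j < t (j + 1))
    (hmesh : ∀ j, 1 ≤ j → j ≤ M →
      lam * (t j - t (j - 1)) ^ α < 1 / Real.Gamma (2 - α))
    (u₀ : ℝ) :
    ∃ U : ℕ → ℝ,
      (U 0 = u₀ ∧ ∀ m, 1 ≤ m → m ≤ M → deltaL1 α t U m + f (t m) (U m) = 0) ∧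
      ∀ U' : ℕ → ℝ,
        (U' 0 = u₀ ∧ ∀ m, 1 ≤ m → m ≤ M → deltaL1 α t U' m + f (t m) (U' m) = 0) →
        ∀ m, m ≤ M → U' m = U m := by
  obtain ⟨hα0, hα1⟩ := hα
  have hΓ2 : 0 < Real.Gamma (2 - α) := Real.Gamma_pos_of_pos (by linarith)
  -- positivity of step sizes
  have hτ : ∀ n : ℕ, n + 1 ≤ M → 0 < t (n + 1) - t n := by
    intro n hn
    have := hmono n (by omega)
    linarith
  -- the coefficient dominates lam
  have hc : ∀ n : ℕ, n + 1 ≤ M → lam < coef α t (n + 1) := by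
    intro n hn
    have hτn := hτ n hn
    have hmesh' := hmesh (n + 1) (by omega) hn
    have hn1 : (n + 1 : ℕ) - 1 = n := rfl
    rw [hn1] at hmesh'
    unfold coef
    rw [hn1]
    have hpow : (t (n + 1) - t n) ^ (-α) = ((t (n + 1) - t n) ^ α)⁻¹ :=
      Real.rpow_neg hτn.le α
    have hpα : 0 < (t (n + 1) - t n) ^ α := Real.rpow_pos_of_pos hτn α
    rw [hpow]
    have h3 := mul_lt_mul_of_pos_right hmesh' (inv_pos.mpr hpα)
    rw [mul_assoc, mul_inv_cancel₀ (ne_of_gt hpα), mul_one] at h3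
    have h4 : 1 / Real.Gamma (2 - α) * ((t (n + 1) - t n) ^ α)⁻¹ =
        ((t (n + 1) - t n) ^ α)⁻¹ / Real.Gamma (2 - α) := by ring
    linarith

  set U : ℕ → ℝ := fun m => seqV α t f u₀ m m with hU
  have hU0 : U 0 = u₀ := rfl
  have hUV : ∀ n k, k ≤ n → seqV α t f u₀ n k = U k := by
    intro n k hk
    exact seqV_stable α t f u₀ n k hk
  -- the scalar equation solved at each step
  have hstep : ∀ n : ℕ, n + 1 ≤ M →
      coef α t (n + 1) * U (n + 1) + f (t (n + 1)) (U (n + 1)) =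
        coef α t (n + 1) * U n - Rsum α t U (n + 1) := by
    intro n hn
    have hex : ∃ x, coef α t (n + 1) * x + f (t (n + 1)) x =
        coef α t (n + 1) * seqV α t f u₀ n n - Rsum α t (seqV α t f u₀ n) (n + 1) :=
      (scalar_solve lam (coef α t (n + 1)) (t (n + 1)) _ hlam (hc n hn) f hfc hfA1).exists
    have hUm : U (n + 1) = solveStep f (coef α t (n + 1)) (t (n + 1))
        (coef α t (n + 1) * seqV α t f u₀ n n - Rsum α t (seqV α t f u₀ n) (n + 1)) := by
      show seqV α t f u₀ (n + 1) (n + 1) = _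
      simp only [seqV]
      rw [if_neg (by omega)]
    have hR : Rsum α t (seqV α t f u₀ n) (n + 1) = Rsum α t U (n + 1) := by
      apply Rsum_congr
      intro k hk
      exact hUV n k (by omega)
    have hVn : seqV α t f u₀ n n = U n := rfl
    rw [hUm, solveStep, dif_pos hex]
    rw [← hR, ← hVn]
    exact hex.choose_spec
  refine ⟨U, ⟨hU0, ?_⟩, ?_⟩
  · -- existence
    intro m hm1 hm2
    obtain ⟨n, rfl⟩ : ∃ n, m = n + 1 := ⟨m - 1, by omega⟩
    rw [deltaL1_decomp α hα0 hα1 t U n (hτ n hm2)]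
    have := hstep n hm2
    linarith
  · -- uniqueness
    rintro U' ⟨hU'0, hU'eq⟩ m
    induction m using Nat.strong_induction_on with
    | _ m ih =>
      intro hm
      match m with
      | 0 => rw [hU'0, hU0]
      | n + 1 =>
        have hn : n + 1 ≤ M := hm
        have hdec := deltaL1_decomp α hα0 hα1 t U' n (hτ n hn)
        have heq := hU'eq (n + 1) (by omega) hn
        rw [hdec] at heq
        have hR : Rsum α t U' (n + 1) = Rsum α t U (n + 1) := by
          apply Rsum_congr
          intro k hk
          exact ih k (by omega) (by omega)
        have hUn : U' n = U n := ih n (by omega) (by omega)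
        have hstep' : coef α t (n + 1) * U' (n + 1) + f (t (n + 1)) (U' (n + 1)) =
            coef α t (n + 1) * U n - Rsum α t U (n + 1) := by
          rw [← hR, ← hUn]; linarith
        exact (scalar_solve lam (coef α t (n + 1)) (t (n + 1))
          (coef α t (n + 1) * U n - Rsum α t U (n + 1)) hlam (hc n hn) f hfc hfA1).unique
          hstep' (hstep n hn)
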